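/- Let S₀, S₁, …, S_k ⊆ B be pairwise isolated subsets with 0 < π(S_i) ≤ 1/2 for every i. Then (E_k − E₀)/(2(‖H‖ − E₀)) ≤ max_{i=0,…,k} π(∂S_i)/π(S_i). -/

import Mathlib

open scoped BigOperators ComplexOrder

/-- The ℓ²-operator norm of a matrix over ℂ. -/
noncomputable def opNorm {B : Type*} [Fintype B] [DecidableEq B] (H : Matrix B B ℂ) : ℝ :=
  ‖Matrix.toEuclideanCLM (𝕜 := ℂ) H‖

/-- The ground-state probability measure of a subset `S`. -/
noncomputable def piS {B : Type*} (ψ : B → ℂ) (S : Finset B) : ℝ :=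
  ∑ z ∈ S, ‖ψ z‖ ^ 2

open scoped Classical in
/-- The interior boundary `∂S` of the set `S` with respect to the matrix `H`. -/
noncomputable def bdry {B : Type*} [Fintype B] (H : Matrix B B ℂ) (S : Finset B) : Finset B :=
  S.filter (fun x => ∃ y ∉ S, H x y ≠ 0)

section aux
variable {B : Type*} [Fintype B] [DecidableEq B]

local notation "⟪" x ", " y "⟫" => inner (𝕜 := ℂ) x y

set_option linter.unusedSectionVars false in
lemma aux_spec_sum (T' : EuclideanSpace ℂ B →L[ℂ] EuclideanSpace ℂ B)
    (hsa : ∀ x y : EuclideanSpace ℂ B, ⟪T' x, y⟫ = ⟪x, T' y⟫)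
    (u : OrthonormalBasis B ℂ (EuclideanSpace ℂ B)) (μ : B → ℝ)
    (hμ : ∀ b, T' (u b) = (μ b : ℂ) • u b) (w : EuclideanSpace ℂ B) :
    ⟪w, T' w⟫ = ((∑ b, μ b * ‖⟪u b, w⟫‖ ^ 2 : ℝ) : ℂ) := by
  rw [← u.sum_inner_mul_inner w (T' w)]
  push_cast
  refine Finset.sum_congr rfl fun b _ => ?_
  have h1 : ⟪u b, T' w⟫ = (μ b : ℂ) * ⟪u b, w⟫ := by
    rw [← hsa, hμ, inner_smul_left]
    simp
  rw [h1, ← inner_conj_symm w (u b)]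
  have h2 : (starRingEnd ℂ) ⟪u b, w⟫ * ⟪u b, w⟫ = ((‖⟪u b, w⟫‖ : ℂ)) ^ 2 := by
    rw [RCLike.conj_mul]
    norm_cast
  calc (starRingEnd ℂ) ⟪u b, w⟫ * ((μ b : ℂ) * ⟪u b, w⟫)
      = (μ b : ℂ) * ((starRingEnd ℂ) ⟪u b, w⟫ * ⟪u b, w⟫) := by ring
    _ = (μ b : ℂ) * (‖⟪u b, w⟫‖ : ℂ) ^ 2 := by rw [h2]

end aux

lemma mem_bdry {B : Type*} [Fintype B] (H : Matrix B B ℂ) (s : Finset B) (x : B) :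
    x ∈ bdry H s ↔ x ∈ s ∧ ∃ y ∉ s, H x y ≠ 0 := by
  classical
  unfold bdry
  rw [Finset.mem_filter]

lemma bdry_subset {B : Type*} [Fintype B] (H : Matrix B B ℂ) (s : Finset B) :
    bdry H s ⊆ s := fun x hx => ((mem_bdry H s x).mp hx).1

set_option maxHeartbeats 1000000 in
/-- Theorem 2 of the paper: if `S₀,…,S_k` are pairwise isolated subsets each with
`0 < π(Sᵢ) ≤ 1/2`, then `(E_k - E₀)/(2(‖H‖-E₀)) ≤ max_i π(∂Sᵢ)/π(Sᵢ)`. -/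
theorem stmt_1 {B : Type*} [Fintype B] [DecidableEq B]
    (H : Matrix B B ℂ) (hH : H.IsHermitian) (hPSD : H.PosSemidef)
    -- `E` enumerates the eigenvalues of `H` (with multiplicity) in increasing order:
    (E : ℕ → ℝ) (hmono : Monotone E)
    (henum : ∃ σ : Fin (Fintype.card B) ≃ B,
      ∀ i : Fin (Fintype.card B), E i = hH.eigenvalues (σ i))
    -- `ψ` is a unit-norm ground state:
    (ψ : B → ℂ) (hψnorm : ∑ z, ‖ψ z‖ ^ 2 = 1)
    (hground : H.mulVec ψ = (E 0 : ℂ) • ψ)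
    -- the subsets `S 0, …, S k` are pairwise disjoint and isolated:
    (k : ℕ) (S : Fin (k + 1) → Finset B)
    (hdisj : ∀ i j, i ≠ j → Disjoint (S i) (S j))
    (hiso : ∀ i j, i ≠ j → ∀ x ∈ S i, ∀ y ∈ S j, H x y = 0)
    (hS0 : ∀ i, 0 < piS ψ (S i)) (hS12 : ∀ i, piS ψ (S i) ≤ 1 / 2) :
    (E k - E 0) / (2 * (opNorm H - E 0)) ≤
      Finset.univ.sup' Finset.univ_nonempty
        (fun i : Fin (k + 1) => piS ψ (bdry H (S i)) / piS ψ (S i)) := by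
  classical
  obtain ⟨σ, hσ⟩ := henum
  have hBne : Nonempty B := by
    by_contra h
    rw [not_nonempty_iff] at h
    rw [Finset.univ_eq_empty, Finset.sum_empty] at hψnorm
    norm_num at hψnorm
  set T := Matrix.toEuclideanCLM (𝕜 := ℂ) H with hTdef
  have hTapp : ∀ (v : EuclideanSpace ℂ B) (x : B), T v x = ∑ y, H x y * v y := by
    intro v x
    have h := Matrix.ofLp_toEuclideanCLM (𝕜 := ℂ) H v
    have h2 := congrFun h x
    exact h2
  have hTstar : star T = T := by
    have hsH : star H = H := hH
    rw [hTdef, ← map_star, hsH]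
  have hTsa : ∀ x y : EuclideanSpace ℂ B,
      inner (𝕜 := ℂ) (T x) y = inner (𝕜 := ℂ) x (T y) := by
    intro x y
    have := ContinuousLinearMap.adjoint_inner_left T y x
    rwa [ContinuousLinearMap.isSelfAdjoint_iff'.mp hTstar] at this
  set u := hH.eigenvectorBasis with hudef
  set eig := hH.eigenvalues with heigdef
  have hueig : ∀ b, T (u b) = ((eig b : ℝ) : ℂ) • u b := by
    intro b
    have h := hH.mulVec_eigenvectorBasis b
    apply PiLp.ext
    intro x
    have := congrFun h x
    rw [hTapp]
    simpa [Matrix.mulVec, dotProduct] using this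
  have heigE : ∀ b, E 0 ≤ eig b := by
    intro b
    have h := hσ (σ.symm b)
    rw [Equiv.apply_symm_apply] at h
    rw [← h]
    exact hmono (Nat.zero_le _)
  have heigN : ∀ b, eig b ≤ opNorm H := by
    intro b
    have h1 : ‖T (u b)‖ ≤ ‖T‖ * ‖u b‖ := T.le_opNorm (u b)
    have h2 : ‖u b‖ = 1 := u.orthonormal.1 b
    rw [hueig b, norm_smul, h2] at h1
    simp only [Complex.norm_real, Real.norm_eq_abs, mul_one] at h1
    calc eig b ≤ |eig b| := le_abs_self _
      _ ≤ ‖T‖ := h1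
      _ = opNorm H := rfl
  set c := opNorm H - E 0 with hcdef
  have hc0 : 0 ≤ c := by
    obtain ⟨b⟩ := hBne
    have := (heigE b).trans (heigN b)
    simp [hcdef]
    linarith
  set A : EuclideanSpace ℂ B →L[ℂ] EuclideanSpace ℂ B :=
    T - ((E 0 : ℂ) • ContinuousLinearMap.id ℂ (EuclideanSpace ℂ B)) with hAdef
  have hAapp : ∀ v : EuclideanSpace ℂ B, A v = T v - (E 0 : ℂ) • v := by
    intro v; rfl
  have hAsa : ∀ x y : EuclideanSpace ℂ B,
      inner (𝕜 := ℂ) (A x) y = inner (𝕜 := ℂ) x (A y) := by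
    intro x y
    rw [hAapp, hAapp, inner_sub_left, inner_sub_right, hTsa,
      inner_smul_left, inner_smul_right]
    simp
  have hAueig : ∀ b, A (u b) = ((eig b - E 0 : ℝ) : ℂ) • u b := by
    intro b
    rw [hAapp, hueig]
    push_cast
    rw [sub_smul]
  have hA2ueig : ∀ b, (A ∘L A) (u b) = (((eig b - E 0) ^ 2 : ℝ) : ℂ) • u b := by
    intro b
    have : (A ∘L A) (u b) = A (A (u b)) := rfl
    rw [this, hAueig, map_smul, hAueig, smul_smul]
    push_cast
    rw [sq]
  have hA2sa : ∀ x y : EuclideanSpace ℂ B,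
      inner (𝕜 := ℂ) ((A ∘L A) x) y = inner (𝕜 := ℂ) x ((A ∘L A) y) := by
    intro x y
    have h1 : (A ∘L A) x = A (A x) := rfl
    have h2 : (A ∘L A) y = A (A y) := rfl
    rw [h1, h2, hAsa, hAsa]
  have hspecA := aux_spec_sum A hAsa u (fun b => eig b - E 0) hAueig
  have hspecA2 := aux_spec_sum (A ∘L A) hA2sa u (fun b => (eig b - E 0) ^ 2) hA2ueig
  have hspecT := aux_spec_sum T hTsa u eig hueig
  have hspecI := aux_spec_sum (ContinuousLinearMap.id ℂ (EuclideanSpace ℂ B))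
    (fun x y => rfl) u (fun _ => (1 : ℝ)) (fun b => by simp) 
  -- nonnegativity of the A-form
  have hAnn : ∀ w : EuclideanSpace ℂ B, 0 ≤ (inner (𝕜 := ℂ) w (A w)).re := by
    intro w
    rw [hspecA w, Complex.ofReal_re]
    apply Finset.sum_nonneg
    intro b _
    have h1 : (0:ℝ) ≤ eig b - E 0 := by linarith [heigE b]
    exact mul_nonneg h1 (by positivity)
  have hnormsq : ∀ w : EuclideanSpace ℂ B,
      (‖w‖ : ℝ) ^ 2 = ∑ b, ‖inner (𝕜 := ℂ) (u b) w‖ ^ 2 := by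
    intro w
    have h := hspecI w
    simp only [ContinuousLinearMap.id_apply, one_mul] at h
    have h2 : inner (𝕜 := ℂ) w w = ((‖w‖ : ℝ) ^ 2 : ℝ) := by
      rw [inner_self_eq_norm_sq_to_K]
      norm_cast
    rw [h2] at h
    exact_mod_cast h
  have hAnorm : ∀ w : EuclideanSpace ℂ B,
      ‖A w‖ ^ 2 ≤ c * (inner (𝕜 := ℂ) w (A w)).re := by
    intro w
    have h1 : (‖A w‖ : ℂ) ^ 2 = inner (𝕜 := ℂ) (A w) (A w) :=
      (inner_self_eq_norm_sq_to_K (A w)).symm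
    have h2 : inner (𝕜 := ℂ) (A w) (A w) = inner (𝕜 := ℂ) w ((A ∘L A) w) := by
      rw [hAsa]; rfl
    have h3 : ‖A w‖ ^ 2 = ∑ b, (eig b - E 0) ^ 2 * ‖inner (𝕜 := ℂ) (u b) w‖ ^ 2 := by
      have := h1.trans (h2.trans (hspecA2 w))
      exact_mod_cast this
    rw [h3, hspecA w, Complex.ofReal_re, Finset.mul_sum]
    apply Finset.sum_le_sum
    intro b _
    have hb1 : 0 ≤ eig b - E 0 := by linarith [heigE b]
    have hb2 : eig b - E 0 ≤ c := by
      rw [hcdef]; linarith [heigN b]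
    have hd : (0 : ℝ) ≤ ‖inner (𝕜 := ℂ) (u b) w‖ ^ 2 := by positivity
    calc (eig b - E 0) ^ 2 * ‖inner (𝕜 := ℂ) (u b) w‖ ^ 2
        = (eig b - E 0) * ((eig b - E 0) * ‖inner (𝕜 := ℂ) (u b) w‖ ^ 2) := by ring
      _ ≤ c * ((eig b - E 0) * ‖inner (𝕜 := ℂ) (u b) w‖ ^ 2) := by
          apply mul_le_mul_of_nonneg_right hb2
          positivity
  have hpiSnn : ∀ s : Finset B, 0 ≤ piS ψ s := by
    intro s; unfold piS; positivity
  -- indicator vectors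
  set ind : Finset B → EuclideanSpace ℂ B :=
    fun s => (WithLp.equiv 2 (B → ℂ)).symm (fun x => if x ∈ s then ψ x else 0) with hinddef
  have hind_apply : ∀ (s : Finset B) (x : B), ind s x = if x ∈ s then ψ x else 0 :=
    fun s x => rfl
  have hinner_ind : ∀ (s : Finset B) (w : EuclideanSpace ℂ B),
      inner (𝕜 := ℂ) (ind s) w = ∑ x ∈ s, (starRingEnd ℂ) (ψ x) * w x := by
    intro s w
    rw [PiLp.inner_apply, ← Finset.sum_subset (Finset.subset_univ s)]
    · refine Finset.sum_congr rfl fun x hx => ?_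
      simp [hind_apply, hx, RCLike.inner_apply, mul_comm]
    · intro x _ hx
      simp [hind_apply, hx, RCLike.inner_apply]
  have hind_self : ∀ s : Finset B,
      inner (𝕜 := ℂ) (ind s) (ind s) = ((piS ψ s : ℝ) : ℂ) := by
    intro s
    rw [hinner_ind]
    unfold piS
    push_cast
    refine Finset.sum_congr rfl fun x hx => ?_
    rw [hind_apply]
    simp only [hx, if_true]
    rw [RCLike.conj_mul]
    norm_cast
  have hind_norm : ∀ s : Finset B, ‖ind s‖ ^ 2 = piS ψ s := by
    intro s
    have h := hind_self s
    have h2 : inner (𝕜 := ℂ) (ind s) (ind s) = ((‖ind s‖ ^ 2 : ℝ) : ℂ) := by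
      rw [inner_self_eq_norm_sq_to_K]
      norm_cast
    rw [h2] at h
    exact_mod_cast h
  set Ψ : EuclideanSpace ℂ B := (WithLp.equiv 2 (B → ℂ)).symm ψ with hPsidef
  have hsplit : ∀ s : Finset B, ind s + ind sᶜ = Ψ := by
    intro s
    apply PiLp.ext
    intro x
    rw [PiLp.add_apply, hind_apply, hind_apply]
    by_cases hx : x ∈ s
    · simp [hx, hPsidef, WithLp.equiv_symm_apply]
    · simp [hx, hPsidef, WithLp.equiv_symm_apply]
  have hTPsi : T Ψ = (E 0 : ℂ) • Ψ := by
    apply PiLp.ext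
    intro x
    rw [hTapp, PiLp.smul_apply]
    have := congrFun hground x
    simp only [Matrix.mulVec, dotProduct, Pi.smul_apply, smul_eq_mul] at this
    simpa [hPsidef, WithLp.equiv_symm_apply, smul_eq_mul] using this
  have hAPsi : A Ψ = 0 := by
    rw [hAapp, hTPsi, sub_self]
  -- the key per-set estimate
  have hper : ∀ i : Fin (k + 1),
      (inner (𝕜 := ℂ) (ind (S i)) (A (ind (S i)))).re ≤ c * piS ψ (bdry H (S i)) := by
    intro i
    set v := ind (S i) with hv
    set v' := ind ((S i)ᶜ) with hv'
    set vb := ind (bdry H (S i)) with hvb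
    set s := (inner (𝕜 := ℂ) v (A v)).re with hs
    set t := (inner (𝕜 := ℂ) v' (A v')).re with ht
    have ht0 : 0 ≤ t := hAnn v'
    have hzero : inner (𝕜 := ℂ) (v + v') (A (v + v')) = 0 := by
      rw [hsplit (S i), hAPsi, inner_zero_right]
    have hexp : inner (𝕜 := ℂ) v (A v) + inner (𝕜 := ℂ) v (A v')
        + inner (𝕜 := ℂ) v' (A v) + inner (𝕜 := ℂ) v' (A v') = 0 := by
      rw [← hzero, map_add, inner_add_left, inner_add_right, inner_add_right]
      ring
    have hconj : (inner (𝕜 := ℂ) v' (A v)).re = (inner (𝕜 := ℂ) v (A v')).re := by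
      rw [← hAsa v' v, ← inner_conj_symm]
      exact Complex.conj_re _
    have hkey : s + t = -2 * (inner (𝕜 := ℂ) v (A v')).re := by
      have h := congrArg Complex.re hexp
      simp only [Complex.add_re, Complex.zero_re] at h
      rw [hconj] at h
      rw [hs, ht]
      linarith
    -- support reduction to the boundary
    have hAv'zero : ∀ x ∈ S i, x ∉ bdry H (S i) → (A v') x = 0 := by
      intro x hx hxb
      have hTv' : T v' x = 0 := by
        rw [hTapp]
        apply Finset.sum_eq_zero
        intro y _
        rw [hv', hind_apply]
        by_cases hy : y ∈ (S i)ᶜ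
        · have hyn : y ∉ S i := Finset.mem_compl.mp hy
          have : H x y = 0 := by
            by_contra hne
            exact hxb ((mem_bdry H (S i) x).mpr ⟨hx, ⟨y, hyn, hne⟩⟩)
          simp [hy, this]
        · simp [hy]
      have hv'x : v' x = 0 := by
        rw [hv', hind_apply]
        simp [Finset.mem_compl, hx]
      rw [hAapp, PiLp.sub_apply, PiLp.smul_apply, hTv', hv'x]
      simp
    have hsupp : inner (𝕜 := ℂ) v (A v') = inner (𝕜 := ℂ) vb (A v') := by
      rw [hv, hvb, hinner_ind, hinner_ind]
      exact (Finset.sum_subset (bdry_subset H (S i))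
        (fun x hx hxb => by rw [hAv'zero x hx hxb, mul_zero])).symm
    have hcs : s + t ≤ 2 * Real.sqrt (piS ψ (bdry H (S i))) * Real.sqrt (c * t) := by
      rw [hkey, hsupp]
      have h1 : -(inner (𝕜 := ℂ) vb (A v')).re ≤ ‖inner (𝕜 := ℂ) vb (A v')‖ := by
        have ha := Complex.abs_re_le_norm (inner (𝕜 := ℂ) vb (A v'))
        have hb := neg_le_abs ((inner (𝕜 := ℂ) vb (A v')).re)
        linarith
      have h2 : ‖inner (𝕜 := ℂ) vb (A v')‖ ≤ ‖vb‖ * ‖A v'‖ := norm_inner_le_norm _ _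
      have h3 : ‖vb‖ = Real.sqrt (piS ψ (bdry H (S i))) := by
        rw [← hind_norm (bdry H (S i)), Real.sqrt_sq (norm_nonneg _)]
      have h4 : ‖A v'‖ ≤ Real.sqrt (c * t) := by
        have := hAnorm v'
        rw [← ht] at this
        calc ‖A v'‖ = Real.sqrt (‖A v'‖ ^ 2) := (Real.sqrt_sq (norm_nonneg _)).symm
          _ ≤ Real.sqrt (c * t) := Real.sqrt_le_sqrt this
      calc (-2 : ℝ) * (inner (𝕜 := ℂ) vb (A v')).re
          ≤ 2 * ‖inner (𝕜 := ℂ) vb (A v')‖ := by linarith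
        _ ≤ 2 * (‖vb‖ * ‖A v'‖) := by linarith
        _ ≤ 2 * (Real.sqrt (piS ψ (bdry H (S i))) * Real.sqrt (c * t)) := by
            rw [h3]
            have := Real.sqrt_nonneg (piS ψ (bdry H (S i)))
            nlinarith [norm_nonneg (A v')]
        _ = 2 * Real.sqrt (piS ψ (bdry H (S i))) * Real.sqrt (c * t) := by ring
    -- conclude s ≤ c * π(∂S)
    have hs0 : 0 ≤ s := hAnn v
    have e1 : Real.sqrt (c * t) = Real.sqrt c * Real.sqrt t := Real.sqrt_mul hc0 t
    have e2 : Real.sqrt c ^ 2 = c := Real.sq_sqrt hc0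
    have e3 : Real.sqrt t ^ 2 = t := Real.sq_sqrt ht0
    have e4 : Real.sqrt (piS ψ (bdry H (S i))) ^ 2 = piS ψ (bdry H (S i)) :=
      Real.sq_sqrt (hpiSnn _)
    nlinarith [sq_nonneg (Real.sqrt c * Real.sqrt (piS ψ (bdry H (S i))) - Real.sqrt t),
      Real.sqrt_nonneg c, Real.sqrt_nonneg t, Real.sqrt_nonneg (piS ψ (bdry H (S i)))]
  -- orthogonality and cross terms
  have hvorth : ∀ i j : Fin (k + 1), i ≠ j →
      inner (𝕜 := ℂ) (ind (S i)) (ind (S j)) = 0 := by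
    intro i j hij
    rw [hinner_ind]
    apply Finset.sum_eq_zero
    intro x hx
    have hxj : x ∉ S j := Finset.disjoint_left.mp (hdisj i j hij) hx
    rw [hind_apply]
    simp [hxj]
  have hcross : ∀ i j : Fin (k + 1), i ≠ j →
      inner (𝕜 := ℂ) (ind (S i)) (A (ind (S j))) = 0 := by
    intro i j hij
    have h1 : inner (𝕜 := ℂ) (ind (S i)) (T (ind (S j))) = 0 := by
      rw [hinner_ind]
      apply Finset.sum_eq_zero
      intro x hx
      have hTx : T (ind (S j)) x = 0 := by
        rw [hTapp]
        apply Finset.sum_eq_zero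
        intro y _
        rw [hind_apply]
        by_cases hy : y ∈ S j
        · rw [hiso i j hij x hx y hy, zero_mul]
        · simp [hy]
      rw [hTx, mul_zero]
    rw [hAapp, inner_sub_right, inner_smul_right, h1, hvorth i j hij]
    simp
  -- number of sets vs dimension
  have hSne : ∀ i, ∃ x, x ∈ S i := by
    intro i
    by_contra h
    push_neg at h
    have h2 : piS ψ (S i) = 0 := by
      unfold piS
      apply Finset.sum_eq_zero
      intro x hx
      exact absurd hx (h x)
    have := hS0 i
    rw [h2] at this
    exact lt_irrefl 0 this
  have hkn : k + 1 ≤ Fintype.card B := by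
    choose f hf using hSne
    have hinj : Function.Injective f := by
      intro i j hij
      by_contra hne
      exact (Finset.disjoint_left.mp (hdisj i j hne) (hf i)) (hij ▸ hf j)
    calc k + 1 = Fintype.card (Fin (k + 1)) := (Fintype.card_fin _).symm
      _ ≤ Fintype.card B := Fintype.card_le_of_injective f hinj
  have hkn' : k ≤ Fintype.card B := by omega
  -- choose a nonzero combination orthogonal to the k lowest eigenvectors
  set L : (Fin (k + 1) → ℂ) →ₗ[ℂ] (Fin k → ℂ) :=
    { toFun := fun cc => fun j =>
        ∑ i, cc i * inner (𝕜 := ℂ) (u (σ (Fin.castLE hkn' j))) (ind (S i)),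
      map_add' := by
        intro a b
        funext j
        simp [add_mul, Finset.sum_add_distrib],
      map_smul' := by
        intro m a
        funext j
        simp [Finset.mul_sum, mul_assoc] } with hLdef
  have hLni : ¬ Function.Injective L := by
    intro hinj
    have h := LinearMap.finrank_le_finrank_of_injective hinj
    rw [Module.finrank_fin_fun, Module.finrank_fin_fun] at h
    omega
  obtain ⟨x, y, hxy, hne⟩ := Function.not_injective_iff.mp hLni
  set cc : Fin (k + 1) → ℂ := x - y with hccdef
  have hcc0 : cc ≠ 0 := sub_ne_zero.mpr hne
  have hLcc : L cc = 0 := by rw [hccdef, map_sub, hxy, sub_self]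
  set w : EuclideanSpace ℂ B := ∑ i, cc i • ind (S i) with hwdef
  have hworth : ∀ m : Fin (Fintype.card B), (m : ℕ) < k →
      inner (𝕜 := ℂ) (u (σ m)) w = 0 := by
    intro m hm
    have h1 := congrFun hLcc ⟨(m : ℕ), hm⟩
    have hcast : Fin.castLE hkn' (⟨(m : ℕ), hm⟩ : Fin k) = m := by
      ext
      rfl
    rw [hwdef, inner_sum]
    simp only [inner_smul_right]
    simp only [hLdef, LinearMap.coe_mk, AddHom.coe_mk, hcast, Pi.zero_apply] at h1
    exact h1
  have hexpand : ∀ (F : EuclideanSpace ℂ B →L[ℂ] EuclideanSpace ℂ B),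
      (∀ i j : Fin (k + 1), i ≠ j → inner (𝕜 := ℂ) (ind (S i)) (F (ind (S j))) = 0) →
      inner (𝕜 := ℂ) w (F w) = ∑ i, (starRingEnd ℂ) (cc i) *
        (cc i * inner (𝕜 := ℂ) (ind (S i)) (F (ind (S i)))) := by
    intro F hdiag
    rw [hwdef, map_sum, sum_inner]
    refine Finset.sum_congr rfl fun i _ => ?_
    rw [inner_smul_left]
    congr 1
    rw [inner_sum, Finset.sum_eq_single i]
    · rw [map_smul, inner_smul_right]
    · intro j _ hj
      rw [map_smul, inner_smul_right, hdiag i j (Ne.symm hj), mul_zero]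
    · intro h
      exact absurd (Finset.mem_univ i) h
  have hwA := hexpand A hcross
  have hwI := hexpand (ContinuousLinearMap.id ℂ (EuclideanSpace ℂ B))
    (by intro i j hij; simpa using hvorth i j hij)
  have hre_term : ∀ (a z : ℂ), ((starRingEnd ℂ) a * (a * z)).re = ‖a‖ ^ 2 * z.re := by
    intro a z
    have h : (starRingEnd ℂ) a * (a * z) = ((‖a‖ ^ 2 : ℝ) : ℂ) * z := by
      rw [← mul_assoc, RCLike.conj_mul]
      norm_cast
    rw [h, Complex.re_ofReal_mul]
  have hwnorm : (inner (𝕜 := ℂ) w w).re = ∑ i, ‖cc i‖ ^ 2 * piS ψ (S i) := by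
    have h := hwI
    simp only [ContinuousLinearMap.id_apply] at h
    rw [h, Complex.re_sum]
    refine Finset.sum_congr rfl fun i _ => ?_
    rw [hre_term, hind_self]
    simp
  have hwAre : (inner (𝕜 := ℂ) w (A w)).re
      = ∑ i, ‖cc i‖ ^ 2 * (inner (𝕜 := ℂ) (ind (S i)) (A (ind (S i)))).re := by
    rw [hwA, Complex.re_sum]
    refine Finset.sum_congr rfl fun i _ => ?_
    rw [hre_term]
  -- w is nonzero
  have hwpos : 0 < (inner (𝕜 := ℂ) w w).re := by
    obtain ⟨i0, hi0⟩ := Function.ne_iff.mp hcc0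
    rw [hwnorm]
    have hterm : 0 < ‖cc i0‖ ^ 2 * piS ψ (S i0) := by
      have h1 : 0 < ‖cc i0‖ := by
        simpa using hi0
      have := hS0 i0
      positivity
    apply Finset.sum_pos' _ ⟨i0, Finset.mem_univ i0, hterm⟩
    intro i _
    exact mul_nonneg (by positivity) (hpiSnn _)
  -- the min-max estimate
  have hEk : E k * (inner (𝕜 := ℂ) w w).re ≤ (inner (𝕜 := ℂ) w (T w)).re := by
    have h1 : (inner (𝕜 := ℂ) w (T w)).re = ∑ b, eig b * ‖inner (𝕜 := ℂ) (u b) w‖ ^ 2 := by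
      rw [hspecT w, Complex.ofReal_re]
    have h2 : (inner (𝕜 := ℂ) w w).re = ∑ b, ‖inner (𝕜 := ℂ) (u b) w‖ ^ 2 := by
      have h := hspecI w
      simp only [ContinuousLinearMap.id_apply, one_mul] at h
      rw [h, Complex.ofReal_re]
    rw [h1, h2, Finset.mul_sum]
    rw [← Equiv.sum_comp σ (fun b => eig b * ‖inner (𝕜 := ℂ) (u b) w‖ ^ 2)]
    rw [← Equiv.sum_comp σ (fun b => E k * ‖inner (𝕜 := ℂ) (u b) w‖ ^ 2)]
    apply Finset.sum_le_sum
    intro m _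
    by_cases hm : (m : ℕ) < k
    · rw [hworth m hm]
      simp
    · push_neg at hm
      have h3 : E k ≤ eig (σ m) := by
        rw [← hσ m]
        exact hmono hm
      exact mul_le_mul_of_nonneg_right h3 (by positivity)
  set M := Finset.univ.sup' Finset.univ_nonempty
    (fun i : Fin (k + 1) => piS ψ (bdry H (S i)) / piS ψ (S i)) with hMdef
  have hM0 : 0 ≤ M := by
    refine le_trans (div_nonneg (hpiSnn (bdry H (S 0))) (hpiSnn (S 0))) ?_
    rw [hMdef]
    exact Finset.le_sup' (fun i : Fin (k + 1) => piS ψ (bdry H (S i)) / piS ψ (S i))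
      (Finset.mem_univ (0 : Fin (k + 1)))
  have hA_le : (inner (𝕜 := ℂ) w (A w)).re ≤ c * M * (inner (𝕜 := ℂ) w w).re := by
    rw [hwAre, hwnorm, Finset.mul_sum]
    apply Finset.sum_le_sum
    intro i _
    have h6 : piS ψ (bdry H (S i)) ≤ M * piS ψ (S i) := by
      have h7 : piS ψ (bdry H (S i)) / piS ψ (S i) ≤ M := by
        rw [hMdef]
        exact Finset.le_sup' (fun i : Fin (k + 1) => piS ψ (bdry H (S i)) / piS ψ (S i))
          (Finset.mem_univ i)
      rw [div_le_iff₀ (hS0 i)] at h7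
      linarith
    have h4 : (inner (𝕜 := ℂ) (ind (S i)) (A (ind (S i)))).re ≤ c * (M * piS ψ (S i)) :=
      le_trans (hper i) (mul_le_mul_of_nonneg_left h6 hc0)
    calc ‖cc i‖ ^ 2 * (inner (𝕜 := ℂ) (ind (S i)) (A (ind (S i)))).re
        ≤ ‖cc i‖ ^ 2 * (c * (M * piS ψ (S i))) :=
          mul_le_mul_of_nonneg_left h4 (by positivity)
      _ = c * M * (‖cc i‖ ^ 2 * piS ψ (S i)) := by ring
  have hAT : (inner (𝕜 := ℂ) w (A w)).re
      = (inner (𝕜 := ℂ) w (T w)).re - E 0 * (inner (𝕜 := ℂ) w w).re := by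
    rw [hAapp, inner_sub_right, inner_smul_right, Complex.sub_re]
    congr 1
    simp [Complex.mul_re]
  have hfinal : E k - E 0 ≤ c * M := by
    have h8 : (E k - E 0) * (inner (𝕜 := ℂ) w w).re ≤ c * M * (inner (𝕜 := ℂ) w w).re := by
      nlinarith [hEk, hA_le, hAT]
    exact le_of_mul_le_mul_right h8 hwpos
  rcases eq_or_lt_of_le hc0 with hceq | hcpos
  · have h9 : (2 : ℝ) * c = 0 := by
      rw [← hceq]
      ring
    rw [h9, div_zero]
    exact hM0
  · have h2c : (0 : ℝ) < 2 * c := by linarith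
    rw [div_le_iff₀ h2c]
    nlinarith [hfinal, hM0, hcpos]
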